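/- Let D ⊂ ℝⁿ be a domain with n ≥ 2, let x₀ ∈ D, and let Q : D → [0,∞] be a measurable function that is integrable on some ball B(x₀, r₀) ⊂ D and has finite mean oscillation at x₀. Then there exist ε₀ ∈ (0, e⁻¹) with B(x₀, ε₀) ⊂ D, a constant C > 0, and ε' ∈ (0, ε₀) such that ∫_{{x : ε < |x−x₀| < ε₀}} Q(x)·( |x−x₀|·log(1/|x−x₀|) )^{−n} dm(x) ≤ C·log log(1/ε) for every ε ∈ (0, ε'); in particular, since n ≥ 2, this integral is o( (log log(1/ε))ⁿ ) as ε → 0⁺. -/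

import Mathlib

open MeasureTheory Set Filter Metric
open scoped ENNReal

/-- The volume `Ωₙ` of the unit ball in `ℝⁿ`. -/
noncomputable def unitBallVol (n : ℕ) : ℝ :=
  (volume (Metric.ball (0 : EuclideanSpace ℝ (Fin n)) 1)).toReal

/-- The mean of `Q` over the ball `B(x₀, ε)`. -/
noncomputable def ballMean (n : ℕ) (Q : EuclideanSpace ℝ (Fin n) → ℝ)
    (x₀ : EuclideanSpace ℝ (Fin n)) (ε : ℝ) : ℝ :=
  (unitBallVol n * ε ^ n)⁻¹ * ∫ x in Metric.ball x₀ ε, Q x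

lemma euclid_nontrivial {n : ℕ} (hn : 1 ≤ n) : Nontrivial (EuclideanSpace ℝ (Fin n)) := by
  refine ⟨⟨0, EuclideanSpace.single ⟨0, by omega⟩ 1, ?_⟩⟩
  intro h
  have := congrArg (fun f => f ⟨0, by omega⟩) h
  simp at this

lemma unitBallVol_pos (n : ℕ) : 0 < unitBallVol n :=
  ENNReal.toReal_pos (measure_ball_pos _ _ one_pos).ne' measure_ball_lt_top.ne

lemma vol_ball {n : ℕ} (hn : 1 ≤ n) (x₀ : EuclideanSpace ℝ (Fin n)) {s : ℝ} (hs : 0 ≤ s) :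
    (volume (Metric.ball x₀ s)).toReal = unitBallVol n * s ^ n := by
  haveI := euclid_nontrivial hn
  rw [Measure.addHaar_ball _ _ hs, finrank_euclideanSpace, Fintype.card_fin,
    ENNReal.toReal_mul, ENNReal.toReal_ofReal (pow_nonneg hs _)]
  rw [unitBallVol, mul_comm]

lemma sphere_null {n : ℕ} (hn : 1 ≤ n) (x₀ : EuclideanSpace ℝ (Fin n)) (s : ℝ) :
    volume (Metric.sphere x₀ s) = 0 := by
  haveI := euclid_nontrivial hn
  exact Measure.addHaar_sphere volume x₀ s

lemma lint_biUnion_le {n : ℕ} (m : ℕ) (A : ℕ → Set (EuclideanSpace ℝ (Fin n)))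
    (g : EuclideanSpace ℝ (Fin n) → ℝ≥0∞) :
    ∫⁻ x in (⋃ k ∈ Finset.range m, A k), g x ≤ ∑ k ∈ Finset.range m, ∫⁻ x in A k, g x := by
  induction m with
  | zero => simp
  | succ m ih =>
    rw [Finset.range_add_one, Finset.sum_insert (by simp)]
    refine le_trans (le_of_eq ?_) ((lintegral_union_le _ _ _).trans (add_le_add_right ih _))
    rw [Finset.set_biUnion_insert]

lemma harmonic_sum_le (m : ℕ) : ∑ k ∈ Finset.range m, (1:ℝ)/(k+1) ≤ 1 + Real.log m := by
  have h := harmonic_le_one_add_log m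
  have h2 : ((harmonic m : ℚ) : ℝ) = ∑ k ∈ Finset.range m, (1:ℝ)/(k+1) := by
    rw [harmonic]
    push_cast
    simp [one_div]
  linarith [h2 ▸ h]

lemma ring_arith (Ω l M T x : ℝ) (hΩ : 0 < Ω) (hl : 0 < l) (hM : 0 < M) (hx : 1 ≤ x)
    (n : ℕ) (hTM : T * x ≤ M * x ^ n) :
    Ω * 2 ^ n * T / (x * l) ^ n ≤ (Ω * 2 ^ n * M / l ^ n) / x := by
  have hx0 : (0:ℝ) < x := by linarith
  rw [mul_pow, div_le_div_iff₀ (by positivity) hx0]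
  have heq : Ω * 2 ^ n * M / l ^ n * (x ^ n * l ^ n) = Ω * 2 ^ n * (M * x ^ n) := by
    field_simp
  rw [heq]
  calc Ω * 2 ^ n * T * x = Ω * 2 ^ n * (T * x) := by ring
    _ ≤ Ω * 2 ^ n * (M * x ^ n) := by
        exact mul_le_mul_of_nonneg_left hTM (by positivity)

set_option maxHeartbeats 2000000 in
/-- If `Q ≥ 0` is measurable, locally integrable at `x₀` and of finite mean oscillation at
`x₀`, then for some `ε₀ ∈ (0, e⁻¹)` and `C > 0` the integral of
`Q(x)·(|x-x₀| log(1/|x-x₀|))⁻ⁿ` over the annulus `ε < |x-x₀| < ε₀` is bounded by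
`C·log log(1/ε)` for all small `ε`; in particular this integral is
`o((log log (1/ε))ⁿ)` as `ε → 0⁺`. -/
theorem stmt4 (n : ℕ) (hn : 2 ≤ n) (D : Set (EuclideanSpace ℝ (Fin n)))
    (hD : IsOpen D) (hDconn : IsConnected D) (x₀ : EuclideanSpace ℝ (Fin n)) (hx₀ : x₀ ∈ D)
    (Q : EuclideanSpace ℝ (Fin n) → ℝ) (hQmeas : Measurable Q) (hQpos : ∀ x, 0 ≤ Q x)
    (r₀ : ℝ) (hr₀ : 0 < r₀) (hball : Metric.ball x₀ r₀ ⊆ D)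
    (hQint : IntegrableOn Q (Metric.ball x₀ r₀))
    (hFMO : Filter.limsup (fun ε : ℝ => ENNReal.ofReal
        ((unitBallVol n * ε ^ n)⁻¹ *
          ∫ x in Metric.ball x₀ ε, |Q x - ballMean n Q x₀ ε|))
      (nhdsWithin 0 (Set.Ioi 0)) < ⊤) :
    ∃ ε₀ : ℝ, 0 < ε₀ ∧ ε₀ < Real.exp (-1) ∧ Metric.ball x₀ ε₀ ⊆ D ∧
      ∃ C : ℝ, 0 < C ∧ ∃ ε' : ℝ, ε' ∈ Set.Ioo 0 ε₀ ∧
        (∀ ε ∈ Set.Ioo (0:ℝ) ε',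
          ∫ x in {x : EuclideanSpace ℝ (Fin n) | ε < dist x x₀ ∧ dist x x₀ < ε₀},
              Q x / (dist x x₀ * Real.log (1 / dist x x₀)) ^ n ≤
            C * Real.log (Real.log (1 / ε))) ∧
        Tendsto (fun ε : ℝ =>
            (∫ x in {x : EuclideanSpace ℝ (Fin n) | ε < dist x x₀ ∧ dist x x₀ < ε₀},
                Q x / (dist x x₀ * Real.log (1 / dist x x₀)) ^ n) /
              Real.log (Real.log (1 / ε)) ^ n)
          (nhdsWithin 0 (Set.Ioi 0)) (nhds 0) := by
  have hΩ : 0 < unitBallVol n := unitBallVol_pos n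
  -- extract an FMO bound δ valid on (0, t)
  obtain ⟨δ, hδ0, t, ht0, hosc⟩ : ∃ δ : ℝ, 0 ≤ δ ∧ ∃ t : ℝ, 0 < t ∧ ∀ s ∈ Set.Ioo (0:ℝ) t,
      (unitBallVol n * s ^ n)⁻¹ * ∫ x in Metric.ball x₀ s, |Q x - ballMean n Q x₀ s| ≤ δ := by
    set L := Filter.limsup (fun ε : ℝ => ENNReal.ofReal
        ((unitBallVol n * ε ^ n)⁻¹ *
          ∫ x in Metric.ball x₀ ε, |Q x - ballMean n Q x₀ ε|))
      (nhdsWithin 0 (Set.Ioi 0)) with hL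
    have hev : ∀ᶠ ε in nhdsWithin (0:ℝ) (Set.Ioi 0), ENNReal.ofReal
        ((unitBallVol n * ε ^ n)⁻¹ *
          ∫ x in Metric.ball x₀ ε, |Q x - ballMean n Q x₀ ε|) < L + 1 :=
      Filter.eventually_lt_of_limsup_lt (ENNReal.lt_add_right hFMO.ne one_ne_zero)
    obtain ⟨t, ht, hsub⟩ := mem_nhdsGT_iff_exists_Ioo_subset.mp hev
    refine ⟨(L+1).toReal, ENNReal.toReal_nonneg, t, ht, fun s hs => ?_⟩
    have h1 := hsub hs
    have hnn : 0 ≤ (unitBallVol n * s ^ n)⁻¹ *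
        ∫ x in Metric.ball x₀ s, |Q x - ballMean n Q x₀ s| :=
      mul_nonneg (inv_nonneg.mpr (mul_nonneg hΩ.le (pow_nonneg hs.1.le _)))
        (integral_nonneg fun x => abs_nonneg _)
    have hne : L + 1 ≠ ⊤ := ENNReal.add_ne_top.mpr ⟨hFMO.ne, ENNReal.one_ne_top⟩
    have h2 := ENNReal.toReal_mono hne h1.le
    rwa [ENNReal.toReal_ofReal hnn] at h2
  -- choose ε₀
  set ε₀ : ℝ := min t (min r₀ (Real.exp (-2))) / 2 with hε₀def
  have hε₀pos : 0 < ε₀ := by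
    have := lt_min ht0 (lt_min hr₀ (Real.exp_pos (-2)))
    positivity
  have hmin1 : min t (min r₀ (Real.exp (-2))) ≤ t := min_le_left _ _
  have hmin2 : min t (min r₀ (Real.exp (-2))) ≤ r₀ := (min_le_right _ _).trans (min_le_left _ _)
  have hmin3 : min t (min r₀ (Real.exp (-2))) ≤ Real.exp (-2) :=
    (min_le_right _ _).trans (min_le_right _ _)
  have hε₀t : ε₀ < t := by rw [hε₀def]; linarith
  have hε₀r : ε₀ < r₀ := by rw [hε₀def]; linarith
  have hε₀e2 : ε₀ < Real.exp (-2) := by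
    rw [hε₀def]; linarith [Real.exp_pos (-2)]
  have hε₀e1 : ε₀ < Real.exp (-1) := hε₀e2.trans (Real.exp_lt_exp.mpr (by norm_num))
  have hε₀1 : ε₀ < 1 := by
    have : Real.exp (-1) < 1 := Real.exp_lt_one_iff.mpr (by norm_num)
    linarith
  have hlogε₀ : Real.log ε₀ < -2 := by
    have := Real.log_lt_log hε₀pos hε₀e2
    rwa [Real.log_exp] at this
  -- dyadic radii
  set r : ℕ → ℝ := fun k => ε₀ / 2 ^ k with hrdef
  have hr_pos : ∀ k, 0 < r k := fun k => div_pos hε₀pos (pow_pos two_pos k)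
  have hr_le : ∀ k, r k ≤ ε₀ := by
    intro k
    have h1 : (1:ℝ) ≤ 2 ^ k := one_le_pow₀ one_le_two
    calc ε₀ / 2 ^ k ≤ ε₀ / 1 := by gcongr
      _ = ε₀ := div_one _
  have hr_succ : ∀ k, r (k+1) = r k / 2 := by
    intro k
    show ε₀ / 2 ^ (k+1) = (ε₀ / 2 ^ k) / 2
    rw [pow_succ]
    ring
  -- integrability
  have hQb : ∀ {s : ℝ}, s ≤ ε₀ → IntegrableOn Q (Metric.ball x₀ s) := fun {s} h =>
    hQint.mono_set (ball_subset_ball (h.trans hε₀r.le))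
  -- mean identities
  have hmean : ∀ {s : ℝ}, 0 < s →
      ∫ x in Metric.ball x₀ s, Q x = unitBallVol n * s ^ n * ballMean n Q x₀ s := by
    intro s hs
    rw [ballMean]
    have hne : unitBallVol n * s ^ n ≠ 0 := by positivity
    field_simp
  have hmean_nn : ∀ {s : ℝ}, 0 < s → 0 ≤ ballMean n Q x₀ s := by
    intro s hs
    exact mul_nonneg (inv_nonneg.mpr (by positivity))
      (setIntegral_nonneg measurableSet_ball fun x _ => hQpos x)
  -- one dyadic step of mean growth
  have hstep : ∀ s : ℝ, 0 < s → s ≤ ε₀ →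
      |ballMean n Q x₀ (s/2) - ballMean n Q x₀ s| ≤ 2 ^ n * δ := by
    intro s hs hsε₀
    have hs2 : 0 < s/2 := by linarith
    have hQs : IntegrableOn Q (Metric.ball x₀ s) := hQb hsε₀
    have hQs2 : IntegrableOn Q (Metric.ball x₀ (s/2)) := hQb (by linarith)
    have hvol2 : (volume (Metric.ball x₀ (s/2))).toReal = unitBallVol n * (s/2) ^ n :=
      vol_ball (by omega) x₀ hs2.le
    set c := ballMean n Q x₀ s with hc
    have hconst : IntegrableOn (fun _ => c) (Metric.ball x₀ (s/2)) volume :=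
      integrableOn_const measure_ball_lt_top.ne
    have hconst' : IntegrableOn (fun _ => c) (Metric.ball x₀ s) volume :=
      integrableOn_const measure_ball_lt_top.ne
    have hne2 : unitBallVol n * (s/2) ^ n ≠ 0 := by positivity
    have key : ballMean n Q x₀ (s/2) - c =
        (unitBallVol n * (s/2) ^ n)⁻¹ * ∫ x in Metric.ball x₀ (s/2), (Q x - c) := by
      rw [integral_sub hQs2 hconst, integral_const, measureReal_restrict_apply_univ, measureReal_def, hvol2, smul_eq_mul, ballMean]
      field_simp
    have habs : |ballMean n Q x₀ (s/2) - c| ≤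
        (unitBallVol n * (s/2) ^ n)⁻¹ * ∫ x in Metric.ball x₀ (s/2), |Q x - c| := by
      have habs0 : |∫ x in Metric.ball x₀ (s/2), (Q x - c)| ≤
          ∫ x in Metric.ball x₀ (s/2), |Q x - c| := by
        simpa [Real.norm_eq_abs] using norm_integral_le_integral_norm
          (μ := volume.restrict (Metric.ball x₀ (s/2))) (fun x => Q x - c)
      rw [key, abs_mul, abs_of_nonneg (inv_nonneg.mpr (by positivity))]
      exact mul_le_mul_of_nonneg_left habs0 (inv_nonneg.mpr (by positivity))
    have hmono : ∫ x in Metric.ball x₀ (s/2), |Q x - c| ≤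
        ∫ x in Metric.ball x₀ s, |Q x - c| := by
      refine setIntegral_mono_set ((hQs.sub hconst').abs) ?_ ?_
      · exact ae_of_all _ fun x => abs_nonneg _
      · exact HasSubset.Subset.eventuallyLE (ball_subset_ball (by linarith))
    have hosc_s : (unitBallVol n * s ^ n)⁻¹ *
        ∫ x in Metric.ball x₀ s, |Q x - c| ≤ δ :=
      hosc s ⟨hs, by linarith⟩
    have hinv : (unitBallVol n * (s/2) ^ n)⁻¹ = 2 ^ n * (unitBallVol n * s ^ n)⁻¹ := by
      rw [div_pow]
      have hne : unitBallVol n * s ^ n ≠ 0 := by positivity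
      field_simp
    calc |ballMean n Q x₀ (s/2) - c|
        ≤ (unitBallVol n * (s/2) ^ n)⁻¹ * ∫ x in Metric.ball x₀ (s/2), |Q x - c| := habs
      _ ≤ (unitBallVol n * (s/2) ^ n)⁻¹ * ∫ x in Metric.ball x₀ s, |Q x - c| := by
          exact mul_le_mul_of_nonneg_left hmono (inv_nonneg.mpr (by positivity))
      _ = 2 ^ n * ((unitBallVol n * s ^ n)⁻¹ * ∫ x in Metric.ball x₀ s, |Q x - c|) := by
          rw [hinv]; ring
      _ ≤ 2 ^ n * δ := by
          have h2 : (0:ℝ) ≤ 2 ^ n := by positivity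
          exact mul_le_mul_of_nonneg_left hosc_s h2
  -- growth of means along dyadic radii
  have hr0 : r 0 = ε₀ := by simp [hrdef]
  have hgrow : ∀ k : ℕ, ballMean n Q x₀ (r k) ≤ ballMean n Q x₀ ε₀ + k * (2 ^ n * δ) := by
    intro k
    induction k with
    | zero => simp [hr0]
    | succ k ih =>
      have hst := hstep (r k) (hr_pos k) (hr_le k)
      have h2 : ballMean n Q x₀ (r (k+1)) ≤ ballMean n Q x₀ (r k) + 2 ^ n * δ := by
        rw [hr_succ k]
        have := (abs_le.mp hst).2
        linarith
      push_cast
      push_cast at ih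
      linarith
  have hringQ : ∀ k : ℕ, ∫ x in Metric.ball x₀ (r k), Q x ≤
      unitBallVol n * (r k) ^ n * (ballMean n Q x₀ ε₀ + k * (2 ^ n * δ)) := by
    intro k
    rw [hmean (hr_pos k)]
    exact mul_le_mul_of_nonneg_left (hgrow k) (by positivity)
  -- constants
  set m₀ : ℝ := ballMean n Q x₀ ε₀ with hm₀def
  have hm₀ : 0 ≤ m₀ := hmean_nn hε₀pos
  set M : ℝ := m₀ + 2 ^ n * δ + 1 with hMdef
  have hM : 0 < M := by positivity
  have hl2 : 0 < Real.log 2 := Real.log_pos one_lt_two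
  have hl2' : Real.log 2 < 1 := by
    have := Real.log_two_lt_d9
    linarith
  set C₁ : ℝ := unitBallVol n * 2 ^ n * M / (Real.log 2) ^ n with hC₁def
  have hC₁ : 0 < C₁ := by positivity
  set C : ℝ := C₁ * (2 + Real.log 5) with hCdef
  have hlog5 : 0 ≤ Real.log 5 := Real.log_nonneg (by norm_num)
  have hC : 0 < C := by
    rw [hCdef]
    nlinarith
  -- choose ε'
  set ε' : ℝ := min ε₀ (Real.exp (-Real.exp 1)) / 2 with hε'def
  have hε'pos : 0 < ε' := by
    have := lt_min hε₀pos (Real.exp_pos (-Real.exp 1))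
    positivity
  have hε'lt : ε' < ε₀ := by
    have h1 : min ε₀ (Real.exp (-Real.exp 1)) ≤ ε₀ := min_le_left _ _
    rw [hε'def]; linarith
  have hε'exp : ε' < Real.exp (-Real.exp 1) := by
    have h1 : min ε₀ (Real.exp (-Real.exp 1)) ≤ Real.exp (-Real.exp 1) := min_le_right _ _
    rw [hε'def]; linarith [Real.exp_pos (-Real.exp 1)]
  -- measurability of the integrand
  have hdistm : Measurable fun x : EuclideanSpace ℝ (Fin n) => dist x x₀ :=
    (continuous_id.dist continuous_const).measurable
  have hfmeas : Measurable fun x : EuclideanSpace ℝ (Fin n) =>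
      Q x / (dist x x₀ * Real.log (1 / dist x x₀)) ^ n :=
    hQmeas.div ((hdistm.mul (Real.measurable_log.comp
      (measurable_const.div hdistm))).pow_const n)
  have hSmeas : ∀ ε : ℝ, MeasurableSet
      {x : EuclideanSpace ℝ (Fin n) | ε < dist x x₀ ∧ dist x x₀ < ε₀} := by
    intro ε
    have : {x : EuclideanSpace ℝ (Fin n) | ε < dist x x₀ ∧ dist x x₀ < ε₀} =
        {x | ε < dist x x₀} ∩ {x | dist x x₀ < ε₀} := rfl
    rw [this]
    exact (measurableSet_lt measurable_const hdistm).inter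
      (measurableSet_lt hdistm measurable_const)
  have hf_nn : ∀ ε : ℝ, 0 < ε → ∀ x ∈
      {x : EuclideanSpace ℝ (Fin n) | ε < dist x x₀ ∧ dist x x₀ < ε₀},
      0 ≤ Q x / (dist x x₀ * Real.log (1 / dist x x₀)) ^ n := by
    intro ε hε x hx
    obtain ⟨hx1, hx2⟩ := hx
    have hd0 : 0 < dist x x₀ := hε.trans hx1
    have h1d : 1 ≤ 1 / dist x x₀ := by
      rw [le_div_iff₀ hd0]
      nlinarith
    exact div_nonneg (hQpos x)
      (pow_nonneg (mul_nonneg dist_nonneg (Real.log_nonneg h1d)) n)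
  -- the main estimate
  have hmain : ∀ ε ∈ Set.Ioo (0:ℝ) ε',
      ∫ x in {x : EuclideanSpace ℝ (Fin n) | ε < dist x x₀ ∧ dist x x₀ < ε₀},
          Q x / (dist x x₀ * Real.log (1 / dist x x₀)) ^ n ≤
        C * Real.log (Real.log (1 / ε)) := by
    intro ε hε
    obtain ⟨hε0, hεε'⟩ := hε
    have hεε₀ : ε < ε₀ := hεε'.trans hε'lt
    have hεe : ε < Real.exp (-Real.exp 1) := hεε'.trans hε'exp
    have hlog1ε : Real.exp 1 < Real.log (1/ε) := by
      have h1 : Real.log ε < -Real.exp 1 := by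
        have := Real.log_lt_log hε0 hεe
        rwa [Real.log_exp] at this
      rw [one_div, Real.log_inv]
      linarith
    have hexp1 : (2:ℝ) < Real.exp 1 := by
      have := Real.exp_one_gt_d9
      linarith
    have hG1 : 1 < Real.log (Real.log (1/ε)) := by
      have h1 : Real.log (Real.exp 1) < Real.log (Real.log (1/ε)) :=
        Real.log_lt_log (Real.exp_pos 1) hlog1ε
      rwa [Real.log_exp] at h1
    set K : ℕ := Nat.ceil (Real.logb 2 (ε₀/ε)) with hKdef
    set A : ℕ → Set (EuclideanSpace ℝ (Fin n)) :=
      fun k => {x | r (k+1) < dist x x₀ ∧ dist x x₀ ≤ r k} with hAdef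
    -- covering
    have hcov : {x : EuclideanSpace ℝ (Fin n) | ε < dist x x₀ ∧ dist x x₀ < ε₀} ⊆
        ⋃ k ∈ Finset.range (K+1), A k := by
      rintro x ⟨hx1, hx2⟩
      have hd0 : 0 < dist x x₀ := hε0.trans hx1
      set d := dist x x₀ with hd
      have hd1 : 1 < ε₀/d := (one_lt_div hd0).mpr hx2
      set u := Real.logb 2 (ε₀/d) with hu
      have hu0 : 0 ≤ u := Real.logb_nonneg one_lt_two hd1.le
      set k := Nat.floor u with hk
      have hk1 : (k:ℝ) ≤ u := Nat.floor_le hu0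
      have hk2 : u < k + 1 := Nat.lt_floor_add_one u
      have h2k : (2:ℝ) ^ k ≤ ε₀/d := by
        have h := Real.rpow_le_rpow_of_exponent_le one_le_two hk1
        rwa [Real.rpow_natCast, Real.rpow_logb two_pos (by norm_num) (by positivity)] at h
      have h2k1 : ε₀/d < (2:ℝ) ^ (k+1) := by
        have h := Real.rpow_lt_rpow_of_exponent_lt one_lt_two hk2
        rw [Real.rpow_logb two_pos (by norm_num) (by positivity)] at h
        have h2 : ((2:ℝ) ^ ((k:ℝ)+1)) = (2:ℝ) ^ (k+1) := by
          rw [show ((k:ℝ)+1) = ((k+1 : ℕ) : ℝ) by push_cast; ring, Real.rpow_natCast]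
        rwa [h2] at h
      have hdk : d ≤ r k := by
        show d ≤ ε₀ / 2 ^ k
        rw [le_div_iff₀ (pow_pos two_pos k)]
        have h := (le_div_iff₀ hd0).mp h2k
        linarith
      have hdk1 : r (k+1) < d := by
        show ε₀ / 2 ^ (k+1) < d
        rw [div_lt_iff₀ (pow_pos two_pos (k+1))]
        have h := (div_lt_iff₀ hd0).mp h2k1
        linarith
      have hkK : k < K + 1 := by
        have huu : u ≤ Real.logb 2 (ε₀/ε) :=
          Real.logb_le_logb_of_le one_lt_two (div_pos hε₀pos hd0)
            (div_le_div_of_nonneg_left hε₀pos.le hε0 hx1.le)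
        have := (Nat.floor_mono huu).trans (Nat.floor_le_ceil _)
        omega
      exact Set.mem_biUnion (Finset.mem_range.mpr hkK) ⟨hdk1, hdk⟩
    -- per-ring estimate
    have hring : ∀ k : ℕ, ∫⁻ x in A k, ENNReal.ofReal
        (Q x / (dist x x₀ * Real.log (1 / dist x x₀)) ^ n) ≤
        ENNReal.ofReal (C₁ / (k+1)) := by
      intro k
      set a : ℝ := r (k+1) * ((k+1) * Real.log 2) with ha
      have hrk1 : 0 < r (k+1) := hr_pos (k+1)
      have ha0 : 0 < a := by positivity
      have hptw : ∀ x ∈ A k, ENNReal.ofReal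
          (Q x / (dist x x₀ * Real.log (1 / dist x x₀)) ^ n) ≤
          ENNReal.ofReal ((a ^ n)⁻¹ * Q x) := by
        rintro x ⟨h1, h2⟩
        apply ENNReal.ofReal_le_ofReal
        set d := dist x x₀ with hd
        have hd0 : 0 < d := hrk1.trans h1
        have hlogd : ((k:ℝ)+1) * Real.log 2 ≤ Real.log (1/d) := by
          have h1d : (2:ℝ) ^ k / ε₀ ≤ 1/d := by
            rw [div_le_div_iff₀ (by positivity) hd0]
            have h := (le_div_iff₀ (pow_pos two_pos k)).mp h2
            linarith
          have hlog : Real.log ((2:ℝ) ^ k / ε₀) ≤ Real.log (1/d) :=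
            Real.log_le_log (by positivity) h1d
          rw [Real.log_div (by positivity) hε₀pos.ne', Real.log_pow] at hlog
          have : ((k:ℝ)+1) * Real.log 2 = k * Real.log 2 + Real.log 2 := by ring
          rw [this]
          linarith
        have hda : a ≤ d * Real.log (1/d) :=
          mul_le_mul h1.le hlogd (mul_nonneg (by positivity) hl2.le) hd0.le
        have hpow : a ^ n ≤ (d * Real.log (1/d)) ^ n := pow_le_pow_left₀ ha0.le hda n
        have hdiv : Q x / (d * Real.log (1/d)) ^ n ≤ Q x / a ^ n :=
          div_le_div_of_nonneg_left (hQpos x) (pow_pos ha0 n) hpow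
        rw [show (a ^ n)⁻¹ * Q x = Q x / a ^ n by rw [div_eq_mul_inv, mul_comm]]
        exact hdiv
      have hTM : (m₀ + (k:ℝ) * (2 ^ n * δ)) * ((k:ℝ)+1) ≤ M * ((k:ℝ)+1) ^ n := by
        have hx : (1:ℝ) ≤ (k:ℝ)+1 := by
          have : (0:ℝ) ≤ (k:ℝ) := Nat.cast_nonneg k
          linarith
        have hx2 : ((k:ℝ)+1) ^ 2 ≤ ((k:ℝ)+1) ^ n := pow_le_pow_right₀ hx hn
        have h2δ : (0:ℝ) ≤ 2 ^ n * δ := by positivity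
        have hk0 : (0:ℝ) ≤ (k:ℝ) := Nat.cast_nonneg k
        have hMx : M * ((k:ℝ)+1) ^ 2 ≤ M * ((k:ℝ)+1) ^ n :=
          mul_le_mul_of_nonneg_left hx2 hM.le
        calc (m₀ + (k:ℝ) * (2 ^ n * δ)) * ((k:ℝ)+1)
            ≤ M * ((k:ℝ)+1) ^ 2 := by
              rw [hMdef]
              nlinarith [mul_nonneg hm₀ hk0, mul_nonneg h2δ hk0, sq_nonneg ((k:ℝ)+1)]
          _ ≤ M * ((k:ℝ)+1) ^ n := hMx
      have harith : (a ^ n)⁻¹ * ∫ x in Metric.ball x₀ (r k), Q x ≤ C₁ / ((k:ℝ)+1) := by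
        have h1 : (a ^ n)⁻¹ * ∫ x in Metric.ball x₀ (r k), Q x ≤
            (a ^ n)⁻¹ * (unitBallVol n * (r k) ^ n * (m₀ + (k:ℝ) * (2 ^ n * δ))) :=
          mul_le_mul_of_nonneg_left (hringQ k) (inv_nonneg.mpr (pow_nonneg ha0.le n))
        have heq : (a ^ n)⁻¹ * (unitBallVol n * (r k) ^ n * (m₀ + (k:ℝ) * (2 ^ n * δ))) =
            unitBallVol n * 2 ^ n * (m₀ + (k:ℝ) * (2 ^ n * δ)) /
              ((((k:ℝ)+1) * Real.log 2)) ^ n := by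
          have hrk : r k = 2 * r (k+1) := by rw [hr_succ k]; ring
          have hA : (0:ℝ) < r (k+1) ^ n := pow_pos hrk1 n
          rw [ha, hrk]
          rw [show ((2:ℝ) * r (k+1)) ^ n = 2 ^ n * r (k+1) ^ n from mul_pow _ _ _]
          rw [show (r (k+1) * (((k:ℝ)+1) * Real.log 2)) ^ n =
            r (k+1) ^ n * ((((k:ℝ)+1) * Real.log 2)) ^ n from mul_pow _ _ _]
          rw [mul_inv, div_eq_mul_inv]
          rw [show (r (k+1) ^ n)⁻¹ * (((((k:ℝ)+1) * Real.log 2)) ^ n)⁻¹ *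
              (unitBallVol n * (2 ^ n * r (k+1) ^ n) * (m₀ + (k:ℝ)*(2^n*δ))) =
              (r (k+1) ^ n)⁻¹ * (r (k+1) ^ n) *
              (unitBallVol n * 2 ^ n * (m₀ + (k:ℝ)*(2^n*δ)) *
                (((((k:ℝ)+1) * Real.log 2)) ^ n)⁻¹) from by ring]
          rw [inv_mul_cancel₀ hA.ne', one_mul]
        have hx : (1:ℝ) ≤ (k:ℝ)+1 := by
          have : (0:ℝ) ≤ (k:ℝ) := Nat.cast_nonneg k
          linarith
        have h2 := ring_arith (unitBallVol n) (Real.log 2) M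
          (m₀ + (k:ℝ) * (2 ^ n * δ)) ((k:ℝ)+1) hΩ hl2 hM hx n hTM
        rw [hC₁def]
        calc (a ^ n)⁻¹ * ∫ x in Metric.ball x₀ (r k), Q x
            ≤ unitBallVol n * 2 ^ n * (m₀ + (k:ℝ) * (2 ^ n * δ)) /
              ((((k:ℝ)+1) * Real.log 2)) ^ n := by rw [← heq]; exact h1
          _ ≤ (unitBallVol n * 2 ^ n * M / (Real.log 2) ^ n) / ((k:ℝ)+1) := h2
      calc ∫⁻ x in A k, ENNReal.ofReal
            (Q x / (dist x x₀ * Real.log (1 / dist x x₀)) ^ n)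
          ≤ ∫⁻ x in A k, ENNReal.ofReal ((a ^ n)⁻¹ * Q x) := by
            refine setLIntegral_mono ((hQmeas.const_mul _).ennreal_ofReal) hptw
        _ = ENNReal.ofReal ((a ^ n)⁻¹) * ∫⁻ x in A k, ENNReal.ofReal (Q x) := by
            rw [← lintegral_const_mul _ hQmeas.ennreal_ofReal]
            congr 1
            ext x
            rw [ENNReal.ofReal_mul (inv_nonneg.mpr (pow_nonneg ha0.le n))]
        _ ≤ ENNReal.ofReal ((a ^ n)⁻¹) *
              ENNReal.ofReal (∫ x in Metric.ball x₀ (r k), Q x) := by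
            apply mul_le_mul_right
            have hsub1 : ∫⁻ x in A k, ENNReal.ofReal (Q x) ≤
                ∫⁻ x in (Metric.ball x₀ (r k) ∪ Metric.sphere x₀ (r k)),
                  ENNReal.ofReal (Q x) := by
              apply lintegral_mono_set
              rintro x ⟨hx1, hx2⟩
              rcases lt_or_eq_of_le hx2 with h | h
              · exact Or.inl h
              · exact Or.inr h
            have hsub2 : ∫⁻ x in (Metric.ball x₀ (r k) ∪ Metric.sphere x₀ (r k)),
                ENNReal.ofReal (Q x) ≤ ∫⁻ x in Metric.ball x₀ (r k), ENNReal.ofReal (Q x) := by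
              refine (lintegral_union_le _ _ _).trans ?_
              rw [setLIntegral_measure_zero _ _ (sphere_null (by omega) x₀ _), add_zero]
            refine (hsub1.trans hsub2).trans (le_of_eq ?_)
            exact (ofReal_integral_eq_lintegral_ofReal (hQb (hr_le k))
              (ae_of_all _ hQpos)).symm
        _ = ENNReal.ofReal ((a ^ n)⁻¹ * ∫ x in Metric.ball x₀ (r k), Q x) :=
            (ENNReal.ofReal_mul (inv_nonneg.mpr (pow_nonneg ha0.le n))).symm
        _ ≤ ENNReal.ofReal (C₁ / ((k:ℝ)+1)) := ENNReal.ofReal_le_ofReal harith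
    -- assemble
    have hK1 : (1:ℝ) ≤ (K:ℝ) + 1 := by
      have : (0:ℝ) ≤ (K:ℝ) := Nat.cast_nonneg K
      linarith
    have htotal : ∫⁻ x in {x : EuclideanSpace ℝ (Fin n) | ε < dist x x₀ ∧ dist x x₀ < ε₀},
        ENNReal.ofReal (Q x / (dist x x₀ * Real.log (1 / dist x x₀)) ^ n) ≤
        ENNReal.ofReal (C₁ * (1 + Real.log ((K:ℝ)+1))) := by
      calc ∫⁻ x in {x : EuclideanSpace ℝ (Fin n) | ε < dist x x₀ ∧ dist x x₀ < ε₀},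
            ENNReal.ofReal (Q x / (dist x x₀ * Real.log (1 / dist x x₀)) ^ n)
          ≤ ∫⁻ x in (⋃ k ∈ Finset.range (K+1), A k),
            ENNReal.ofReal (Q x / (dist x x₀ * Real.log (1 / dist x x₀)) ^ n) :=
            lintegral_mono_set hcov
        _ ≤ ∑ k ∈ Finset.range (K+1), ∫⁻ x in A k,
            ENNReal.ofReal (Q x / (dist x x₀ * Real.log (1 / dist x x₀)) ^ n) :=
            lint_biUnion_le _ _ _
        _ ≤ ∑ k ∈ Finset.range (K+1), ENNReal.ofReal (C₁ / ((k:ℝ)+1)) :=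
            Finset.sum_le_sum fun k _ => hring k
        _ = ENNReal.ofReal (∑ k ∈ Finset.range (K+1), C₁ / ((k:ℝ)+1)) :=
            (ENNReal.ofReal_sum_of_nonneg fun k _ => by positivity).symm
        _ ≤ ENNReal.ofReal (C₁ * (1 + Real.log ((K:ℝ)+1))) := by
            apply ENNReal.ofReal_le_ofReal
            have hsum : ∑ k ∈ Finset.range (K+1), C₁ / ((k:ℝ)+1) =
                C₁ * ∑ k ∈ Finset.range (K+1), (1:ℝ)/((k:ℝ)+1) := by
              rw [Finset.mul_sum]
              congr 1
              ext k
              ring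
            rw [hsum]
            have hh := harmonic_sum_le (K+1)
            have hcast : Real.log ((K+1 : ℕ) : ℝ) = Real.log ((K:ℝ)+1) := by push_cast; ring_nf
            rw [hcast] at hh
            exact mul_le_mul_of_nonneg_left hh hC₁.le
    have hEq : ∫ x in {x : EuclideanSpace ℝ (Fin n) | ε < dist x x₀ ∧ dist x x₀ < ε₀},
        Q x / (dist x x₀ * Real.log (1 / dist x x₀)) ^ n =
        (∫⁻ x in {x : EuclideanSpace ℝ (Fin n) | ε < dist x x₀ ∧ dist x x₀ < ε₀},
          ENNReal.ofReal (Q x / (dist x x₀ * Real.log (1 / dist x x₀)) ^ n)).toReal :=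
      integral_eq_lintegral_of_nonneg_ae
        (ae_restrict_of_forall_mem (hSmeas ε) (hf_nn ε hε0))
        hfmeas.aestronglyMeasurable.restrict
    have hlogK0 : 0 ≤ Real.log ((K:ℝ)+1) := Real.log_nonneg hK1
    have h1 : ∫ x in {x : EuclideanSpace ℝ (Fin n) | ε < dist x x₀ ∧ dist x x₀ < ε₀},
        Q x / (dist x x₀ * Real.log (1 / dist x x₀)) ^ n ≤
        C₁ * (1 + Real.log ((K:ℝ)+1)) := by
      rw [hEq]
      exact ENNReal.toReal_le_of_le_ofReal (by positivity) htotal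
    -- bound K in terms of ε
    have hK5 : (K:ℝ) + 1 ≤ 5 * Real.log (1/ε) := by
      set u := Real.logb 2 (ε₀/ε) with hu
      have hu0 : 0 ≤ u := Real.logb_nonneg one_lt_two ((one_lt_div hε0).mpr hεε₀).le
      have hKu : (K:ℝ) < u + 1 := Nat.ceil_lt_add_one hu0
      have hl2half : (1:ℝ)/2 < Real.log 2 := by
        have := Real.log_two_gt_d9
        linarith
      have hlogdiv : Real.log (ε₀/ε) ≤ Real.log (1/ε) :=
        Real.log_le_log (by positivity) ((div_le_div_iff_of_pos_right hε0).mpr hε₀1.le)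
      have hlog1ε0 : 0 < Real.log (1/ε) := by linarith [Real.exp_pos 1]
      have hub : u ≤ 2 * Real.log (1/ε) := by
        rw [hu, Real.logb]
        rw [div_le_iff₀ hl2]
        have hlogdiv0 : 0 ≤ Real.log (ε₀/ε) :=
          Real.log_nonneg ((one_le_div hε0).mpr hεε₀.le)
        nlinarith
      nlinarith [hexp1, hlog1ε]
    have h2 : C₁ * (1 + Real.log ((K:ℝ)+1)) ≤ C * Real.log (Real.log (1/ε)) := by
      have hlogK : Real.log ((K:ℝ)+1) ≤ Real.log 5 + Real.log (Real.log (1/ε)) := by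
        have hlog1ε0 : 0 < Real.log (1/ε) := by linarith [Real.exp_pos 1]
        calc Real.log ((K:ℝ)+1) ≤ Real.log (5 * Real.log (1/ε)) :=
            Real.log_le_log (by linarith) hK5
          _ = Real.log 5 + Real.log (Real.log (1/ε)) :=
            Real.log_mul (by norm_num) hlog1ε0.ne'
      have hkey : 1 + Real.log ((K:ℝ)+1) ≤ (2 + Real.log 5) * Real.log (Real.log (1/ε)) := by
        nlinarith
      calc C₁ * (1 + Real.log ((K:ℝ)+1))
          ≤ C₁ * ((2 + Real.log 5) * Real.log (Real.log (1/ε))) :=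
            mul_le_mul_of_nonneg_left hkey hC₁.le
        _ = C * Real.log (Real.log (1/ε)) := by rw [hCdef]; ring
    linarith
  -- conclusion
  refine ⟨ε₀, hε₀pos, hε₀e1, Subset.trans (ball_subset_ball hε₀r.le) hball,
    C, hC, ε', ⟨hε'pos, hε'lt⟩, hmain, ?_⟩
  -- the o(loglog^n) statement
  have hioo : Set.Ioo (0:ℝ) ε' ∈ nhdsWithin (0:ℝ) (Set.Ioi 0) :=
    Ioo_mem_nhdsGT_of_mem ⟨le_refl 0, hε'pos⟩
  have hG1 : ∀ ε ∈ Set.Ioo (0:ℝ) ε', 1 < Real.log (Real.log (1/ε)) := by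
    intro ε hε
    obtain ⟨hε0, hεε'⟩ := hε
    have hεe : ε < Real.exp (-Real.exp 1) := hεε'.trans hε'exp
    have hlog1ε : Real.exp 1 < Real.log (1/ε) := by
      have h1 : Real.log ε < -Real.exp 1 := by
        have := Real.log_lt_log hε0 hεe
        rwa [Real.log_exp] at this
      rw [one_div, Real.log_inv]
      linarith
    have h1 : Real.log (Real.exp 1) < Real.log (Real.log (1/ε)) :=
      Real.log_lt_log (Real.exp_pos 1) hlog1ε
    rwa [Real.log_exp] at h1
  have hF_nn : ∀ ε ∈ Set.Ioo (0:ℝ) ε',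
      0 ≤ ∫ x in {x : EuclideanSpace ℝ (Fin n) | ε < dist x x₀ ∧ dist x x₀ < ε₀},
        Q x / (dist x x₀ * Real.log (1 / dist x x₀)) ^ n := by
    intro ε hε
    exact setIntegral_nonneg (hSmeas ε) (hf_nn ε hε.1)
  apply squeeze_zero' (g := fun ε : ℝ => C / Real.log (Real.log (1/ε)))
  · filter_upwards [hioo] with ε hε
    have hG := (hG1 ε hε).le
    exact div_nonneg (hF_nn ε hε) (pow_nonneg (by linarith) n)
  · filter_upwards [hioo] with ε hε
    set G := Real.log (Real.log (1/ε)) with hGdef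
    have hG : 1 < G := hG1 ε hε
    have hGn : (0:ℝ) < G ^ n := pow_pos (by linarith) n
    have hF := hmain ε hε
    have hF0 := hF_nn ε hε
    calc (∫ x in {x : EuclideanSpace ℝ (Fin n) | ε < dist x x₀ ∧ dist x x₀ < ε₀},
          Q x / (dist x x₀ * Real.log (1 / dist x x₀)) ^ n) / G ^ n
        ≤ (C * G) / G ^ n := by gcongr
      _ ≤ C / G := by
          rw [div_le_div_iff₀ hGn (by linarith)]
          have hpow : G ^ 2 ≤ G ^ n := pow_le_pow_right₀ hG.le hn
          nlinarith
  · have h1 : Tendsto (fun ε : ℝ => 1/ε) (nhdsWithin (0:ℝ) (Set.Ioi 0)) atTop := by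
      simpa [one_div] using tendsto_inv_nhdsGT_zero (𝕜 := ℝ)
    have hGt : Tendsto (fun ε : ℝ => Real.log (Real.log (1/ε)))
        (nhdsWithin (0:ℝ) (Set.Ioi 0)) atTop :=
      Real.tendsto_log_atTop.comp (Real.tendsto_log_atTop.comp h1)
    exact hGt.const_div_atTop C
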